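/- Let G be a finite simple graph on a vertex set V, and let G' be the simple graph on V × {0,1} in which (u,i) and (v,j) are adjacent if and only if either (u = v and i ≠ j) or u and v are adjacent in G. Then for every natural number k: G has an independent set of size at least k if and only if there exists a set S ⊆ V × {0,1} with |S| ≥ 2k such that the subgraph of G' induced by S is bipartite (2-colorable). -/

import Mathlib

/-- The "doubled" graph `G'` on `V × Fin 2`: `(u,i)` and `(v,j)` are adjacent iff
either `u = v` and `i ≠ j`, or `u` and `v` are adjacent in `G`. -/
def doubledGraph {V : Type*} (G : SimpleGraph V) : SimpleGraph (V × Fin 2) where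
  Adj a b := (a.1 = b.1 ∧ a.2 ≠ b.2) ∨ G.Adj a.1 b.1
  symm := by
    constructor
    rintro ⟨u, i⟩ ⟨v, j⟩ (⟨h1, h2⟩ | h)
    · exact Or.inl ⟨h1.symm, h2.symm⟩
    · exact Or.inr h.symm
  loopless := by
    constructor
    rintro ⟨u, i⟩ (⟨-, h⟩ | h)
    · exact h rfl
    · exact G.irrefl h

theorem stmt0 {V : Type*} [Fintype V] (G : SimpleGraph V) (k : ℕ) :
    (∃ I : Finset V, (∀ u ∈ I, ∀ v ∈ I, ¬ G.Adj u v) ∧ k ≤ I.card) ↔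
      (∃ S : Finset (V × Fin 2), 2 * k ≤ S.card ∧
        ((doubledGraph G).induce (↑S : Set (V × Fin 2))).Colorable 2) := by
  classical
  constructor
  · rintro ⟨I, hI, hk⟩
    refine ⟨I ×ˢ Finset.univ, ?_, ?_⟩
    · rw [Finset.card_product]
      simpa [mul_comm] using Nat.mul_le_mul_right 2 hk
    · refine ⟨SimpleGraph.Coloring.mk (fun x => (x : V × Fin 2).2) ?_⟩
      rintro ⟨a, ha⟩ ⟨b, hb⟩ hadj
      have ha' : a.1 ∈ I := by
        have : a ∈ I ×ˢ (Finset.univ : Finset (Fin 2)) := ha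
        exact (Finset.mem_product.mp this).1
      have hb' : b.1 ∈ I := by
        have : b ∈ I ×ˢ (Finset.univ : Finset (Fin 2)) := hb
        exact (Finset.mem_product.mp this).1
      have hadj' : (doubledGraph G).Adj a b := hadj
      rcases hadj' with ⟨-, h2⟩ | h
      · exact h2
      · exact absurd h (hI _ ha' _ hb')
  · rintro ⟨S, hcard, ⟨c⟩⟩
    set g : V × Fin 2 → Fin 2 :=
      fun p => if h : p ∈ (↑S : Set (V × Fin 2)) then c ⟨p, h⟩ else 0 with hg
    have key : ∀ i : Fin 2, k ≤ (S.filter fun p => g p = i).card →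
        ∃ I : Finset V, (∀ u ∈ I, ∀ v ∈ I, ¬ G.Adj u v) ∧ k ≤ I.card := by
      intro i hi
      refine ⟨(S.filter fun p => g p = i).image Prod.fst, ?_, ?_⟩
      · intro u hu v hv hadj
        simp only [Finset.mem_image, Finset.mem_filter] at hu hv
        obtain ⟨p, ⟨hpS, hpc⟩, hpu⟩ := hu
        obtain ⟨q, ⟨hqS, hqc⟩, hqv⟩ := hv
        have hpS' : p ∈ (↑S : Set (V × Fin 2)) := hpS
        have hqS' : q ∈ (↑S : Set (V × Fin 2)) := hqS
        have hadj' : ((doubledGraph G).induce (↑S : Set (V × Fin 2))).Adj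
            ⟨p, hpS'⟩ ⟨q, hqS'⟩ := by
          show (doubledGraph G).Adj p q
          exact Or.inr (by rw [hpu, hqv]; exact hadj)
        have hne := c.valid hadj'
        apply hne
        have h1 : g p = c ⟨p, hpS'⟩ := dif_pos hpS'
        have h2 : g q = c ⟨q, hqS'⟩ := dif_pos hqS'
        rw [← h1, ← h2, hpc, hqc]
      · refine le_trans hi (le_of_eq (Finset.card_image_of_injOn ?_).symm)
        intro p hp q hq hpq
        simp only [Finset.mem_coe, Finset.mem_filter] at hp hq
        obtain ⟨hpS, hpc⟩ := hp
        obtain ⟨hqS, hqc⟩ := hq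
        by_contra hne
        have hsnd : p.2 ≠ q.2 := by
          intro h
          exact hne (Prod.ext hpq h)
        have hpS' : p ∈ (↑S : Set (V × Fin 2)) := hpS
        have hqS' : q ∈ (↑S : Set (V × Fin 2)) := hqS
        have hadj' : ((doubledGraph G).induce (↑S : Set (V × Fin 2))).Adj
            ⟨p, hpS'⟩ ⟨q, hqS'⟩ := by
          show (doubledGraph G).Adj p q
          exact Or.inl ⟨hpq, hsnd⟩
        have hne2 := c.valid hadj'
        apply hne2
        have h1 : g p = c ⟨p, hpS'⟩ := dif_pos hpS'
        have h2 : g q = c ⟨q, hqS'⟩ := dif_pos hqS'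
        rw [← h1, ← h2, hpc, hqc]
    have hsplit : (S.filter fun p => g p = 0).card + (S.filter fun p => g p = 1).card
        = S.card := by
      have heq : (S.filter fun p => g p = 1) = S.filter (fun p => ¬ g p = 0) := by
        apply Finset.filter_congr
        intro p _
        constructor
        · intro h h0; exact absurd (h0.symm.trans h) (by decide)
        · intro h
          have h2 : (g p).val ≠ 0 := fun hv => h (Fin.ext hv)
          have h3 := (g p).isLt
          exact Fin.ext (by omega)
      rw [heq, Finset.card_filter_add_card_filter_not]
    rcases le_or_gt k ((S.filter fun p => g p = 0).card) with h | h
    · exact key 0 h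
    · exact key 1 (by omega)
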